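/- arXiv:2112.11863 — 3 statements merged into one kernel-verified Lean document; each statement's English description precedes it below -/
import Mathlib

section
/- With H(x,y) = (ν*x+y)*((ν*x-y)*(a1 - a3*x*y) - 2*(1-ν)*(a0 - a4*x^2*y^2)) and F(x,y) = X(x)*y^2 - x^2*Y(y) where X(x) = a0 + a1*x + a2*x^2 + a3*x^3 + a4*x^4 and Y(y) = a0 + a1*y + a2*y^2 + a3*y^3 + a4*y^4, the identity x*∂H/∂x - y*∂H/∂y = -2*(1-ν)*F*(ν*x+y)/(x-y)^2 + 2*H*(ν*x^2+y^2)/((x-y)*(ν*x+y)) holds whenever x ≠ y and ν*x + y ≠ 0. -/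
/-- The quartic metric function `X` (also giving `Y` when evaluated at `y`). -/
def Xq (a0 a1 a2 a3 a4 t : ℝ) : ℝ := a0 + a1*t + a2*t^2 + a3*t^3 + a4*t^4

/-- The Chen-Teo metric function `F`. -/
def Fq (a0 a1 a2 a3 a4 x y : ℝ) : ℝ :=
  Xq a0 a1 a2 a3 a4 x * y^2 - x^2 * Xq a0 a1 a2 a3 a4 y

/-- The Chen-Teo metric function `H`. -/
def Hq (ν a0 a1 a3 a4 x y : ℝ) : ℝ :=
  (ν*x + y)*((ν*x - y)*(a1 - a3*x*y) - 2*(1 - ν)*(a0 - a4*x^2*y^2))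

lemma cubic_hasDerivAt (c0 c1 c2 c3 x : ℝ) :
    HasDerivAt (fun t : ℝ => c0 + c1*t + c2*t^2 + c3*t^3)
      (c1 + 2*c2*x + 3*c3*x^2) x := by
  have h := (((hasDerivAt_id x).const_mul c1).add
    ((hasDerivAt_pow 2 x).const_mul c2)).add ((hasDerivAt_pow 3 x).const_mul c3)
  have h' := (hasDerivAt_const x c0).add h
  have e : (fun t : ℝ => c0 + c1*t + c2*t^2 + c3*t^3) = (fun x => c0) + (((fun y => c1 * id y) + fun y => c2 * y ^ 2) + fun y => c3 * y ^ 3) := by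
    funext t; simp only [id, Pi.add_apply]; ring
  rw [e]
  refine h'.congr_deriv ?_
  · push_cast; ring

theorem chenTeo_H_flow_identity (ν a0 a1 a2 a3 a4 x y : ℝ)
    (hxy : x ≠ y) (hν : ν*x + y ≠ 0) :
    x * deriv (fun t : ℝ => Hq ν a0 a1 a3 a4 t y) x
      - y * deriv (fun s : ℝ => Hq ν a0 a1 a3 a4 x s) y
    = -2*(1 - ν) * Fq a0 a1 a2 a3 a4 x y * (ν*x + y)/(x - y)^2
      + 2 * Hq ν a0 a1 a3 a4 x y * (ν*x^2 + y^2)/((x - y)*(ν*x + y)) := by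
  have hx : deriv (fun t : ℝ => Hq ν a0 a1 a3 a4 t y) x
      = (ν*(-a1*y - 2*(1-ν)*a0) + y*(a1*ν + a3*y^2))
        + 2*(ν*(a1*ν + a3*y^2) + y*(-a3*ν*y + 2*(1-ν)*a4*y^2))*x
        + 3*(ν*(-a3*ν*y + 2*(1-ν)*a4*y^2))*x^2 := by
    have h : (fun t : ℝ => Hq ν a0 a1 a3 a4 t y)
        = fun t : ℝ => (y*(-a1*y - 2*(1-ν)*a0))
          + (ν*(-a1*y - 2*(1-ν)*a0) + y*(a1*ν + a3*y^2))*t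
          + (ν*(a1*ν + a3*y^2) + y*(-a3*ν*y + 2*(1-ν)*a4*y^2))*t^2
          + (ν*(-a3*ν*y + 2*(1-ν)*a4*y^2))*t^3 := by
      funext t; unfold Hq; ring
    rw [h, (cubic_hasDerivAt _ _ _ _ x).deriv]
  have hy : deriv (fun s : ℝ => Hq ν a0 a1 a3 a4 x s) y
      = ((ν*x)*(-a1 - a3*ν*x^2) + (a1*ν*x - 2*(1-ν)*a0))
        + 2*((ν*x)*(a3*x + 2*(1-ν)*a4*x^2) + (-a1 - a3*ν*x^2))*y
        + 3*((a3*x + 2*(1-ν)*a4*x^2))*y^2 := by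
    have h : (fun s : ℝ => Hq ν a0 a1 a3 a4 x s)
        = fun s : ℝ => ((ν*x)*(a1*ν*x - 2*(1-ν)*a0))
          + ((ν*x)*(-a1 - a3*ν*x^2) + (a1*ν*x - 2*(1-ν)*a0))*s
          + ((ν*x)*(a3*x + 2*(1-ν)*a4*x^2) + (-a1 - a3*ν*x^2))*s^2
          + ((a3*x + 2*(1-ν)*a4*x^2))*s^3 := by
      funext s; unfold Hq; ring
    rw [h, (cubic_hasDerivAt _ _ _ _ y).deriv]
  rw [hx, hy]
  have hxy' : x - y ≠ 0 := sub_ne_zero.mpr hxy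
  have hν' : x*ν + y ≠ 0 := by rwa [mul_comm]
  unfold Hq Fq Xq
  field_simp
  ring
end

section
/- Let Ψ0, Ψ2 be complex with Ψ4 = conj(Ψ0), Ψ2 real, and suppose Ψ0 = 3*(f/conj(f))*Ψ2 for some nonzero complex number f. Set e^{iψ} = (Ψ0/conj(Ψ0))^{1/4}. Then the transformed scalars Ψ̂0 = (1/4)Ψ0 + (1/4)e^{4iψ}conj(Ψ0) - (1/2)e^{2iψ}(Ψ0 conj(Ψ0))^{1/2} and Ψ̂1 = -(Ψ0 - e^{4iψ}conj(Ψ0))/(4e^{iψ}) both vanish, and Ψ̂2 = (2Ψ0 + 2e^{4iψ}conj(Ψ0) + (4/3)e^{2iψ}(Ψ0 conj(Ψ0))^{1/2})/(8e^{2iψ}) equals -2Ψ2. -/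
/-- The tetrad rotation into adapted form: with `Ψ4 = conj Ψ0`, `Ψ2` real and negative
(as for the Chen-Teo instanton), `Ψ0 = 3 (f/conj f) Ψ2` for some nonzero `f`, and
`e = e^{iψ} = (Ψ0/conj Ψ0)^{1/4}` (so that `e² = Ψ0/|Ψ0|`), the rotated Weyl scalars
`Ψ̂0` and `Ψ̂1` vanish and `Ψ̂2 = -2Ψ2`. -/
theorem adapted_tetrad_rotation (f Ψ0 e : ℂ) (Ψ2 : ℝ)
    (hf : f ≠ 0) (hΨ2 : Ψ2 < 0)
    (hΨ0 : Ψ0 = 3 * (f / star f) * (Ψ2 : ℂ))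
    (he : e^2 = Ψ0 / ((‖Ψ0‖ : ℝ) : ℂ)) :
    (1/4)*Ψ0 + (1/4)*e^4*star Ψ0 - (1/2)*e^2*((‖Ψ0‖ : ℝ) : ℂ) = 0 ∧
    -(Ψ0 - e^4*star Ψ0)/(4*e) = 0 ∧
    (2*Ψ0 + 2*e^4*star Ψ0 + (4/3)*e^2*((‖Ψ0‖ : ℝ) : ℂ))/(8*e^2) = -2*(Ψ2 : ℂ) := by
  have hΨ0ne : Ψ0 ≠ 0 := by
    rw [hΨ0]
    have h2 : (Ψ2 : ℂ) ≠ 0 := by exact_mod_cast hΨ2.ne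
    have hsf : star f ≠ 0 := star_ne_zero.mpr hf
    field_simp
    exact div_ne_zero (mul_ne_zero (mul_ne_zero three_ne_zero hf) h2) hsf
  have hA : ‖Ψ0‖ = -3 * Ψ2 := by
    have h1 : ‖f / star f‖ = 1 := by
      rw [norm_div]
      simp [div_self (norm_ne_zero_iff.mpr hf)]
    rw [hΨ0, norm_mul, norm_mul, h1, Complex.norm_real, Real.norm_eq_abs, abs_of_neg hΨ2]
    norm_num
  have hAne : ((‖Ψ0‖ : ℝ) : ℂ) ≠ 0 := by
    exact_mod_cast (norm_ne_zero_iff.mpr hΨ0ne)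
  have hAC : ((‖Ψ0‖ : ℝ) : ℂ) = -3 * (Ψ2 : ℂ) := by
    rw [hA]; push_cast; ring
  have hsq : ((‖Ψ0‖ : ℝ) : ℂ)^2 = Ψ0 * star Ψ0 := by
    rw [show star Ψ0 = (starRingEnd ℂ) Ψ0 from rfl, Complex.mul_conj,
      Complex.normSq_eq_norm_sq]
    push_cast; ring
  have he2 : e^2 * ((‖Ψ0‖ : ℝ) : ℂ) = Ψ0 := by
    rw [he]; field_simp
  have he4 : e^4 * star Ψ0 = Ψ0 := by
    apply mul_left_cancel₀ hΨ0ne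
    linear_combination (e^2*((‖Ψ0‖ : ℝ) : ℂ) + Ψ0) * he2 - e^4 * hsq
  have hene : e ≠ 0 := by
    intro h
    apply hΨ0ne
    rw [h] at he
    simpa [div_eq_zero_iff, hAne] using he.symm
  refine ⟨?_, ?_, ?_⟩
  · linear_combination (1/4) * he4 - (1/2) * he2
  · have hnum : Ψ0 - e^4 * star Ψ0 = 0 := by linear_combination -he4
    rw [hnum]; simp
  · rw [div_eq_iff (by exact mul_ne_zero (by norm_num) (pow_ne_zero 2 hene))]
    linear_combination 2*he4 - 4*he2 + (16/3)*e^2*hAC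
end

section
/- Let ξ ∈ (1/2, 1/√2) and x2 < 0 be real. Define ν = -2ξ², x1 = -ξ(1 - 2ξ + 2ξ²)x2/(1 - 2ξ), x3 = (1 - 2ξ + 2ξ²)x2/(4ξ²(1-ξ)), x4 = 0. Then x1 < x2 < x3 < 0 = x4. -/
/-- Ordering of the quartic roots in the parametrization of the Chen-Teo
2-parameter instanton family. -/
theorem chenTeo_root_ordering (ξ x2 : ℝ)
    (hξ : ξ ∈ Set.Ioo (1/2 : ℝ) (1/Real.sqrt 2)) (hx2 : x2 < 0)
    (x1 x3 x4 : ℝ)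
    (hx1 : x1 = -(ξ*(1 - 2*ξ + 2*ξ^2)*x2)/(1 - 2*ξ))
    (hx3 : x3 = (1 - 2*ξ + 2*ξ^2)*x2/(4*ξ^2*(1 - ξ)))
    (hx4 : x4 = 0) :
    x1 < x2 ∧ x2 < x3 ∧ x3 < 0 ∧ 0 = x4 := by
  obtain ⟨h1, h2⟩ := hξ
  have hs2 : (0:ℝ) < Real.sqrt 2 := Real.sqrt_pos.mpr (by norm_num)
  have hξpos : (0:ℝ) < ξ := by linarith
  have hsq : 2 * ξ^2 < 1 := by
    have h3 : ξ * Real.sqrt 2 < 1 := (lt_div_iff₀ hs2).mp h2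
    nlinarith [Real.sq_sqrt (by norm_num : (0:ℝ) ≤ 2), mul_pos hξpos hs2]
  have hden1 : 1 - 2*ξ < 0 := by linarith
  have hden1' : (1 - 2*ξ) ≠ 0 := ne_of_lt hden1
  have hξ1 : ξ < 1 := by nlinarith
  have hden3 : 0 < 4*ξ^2*(1 - ξ) := by nlinarith [mul_pos (mul_pos hξpos hξpos) (sub_pos.mpr hξ1)]
  have hQ : 0 < 1 - 2*ξ + 2*ξ^2 := by nlinarith
  have e1 : x1 * (1 - 2*ξ) = -(ξ*(1 - 2*ξ + 2*ξ^2)*x2) := by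
    rw [hx1]; exact div_mul_cancel₀ _ hden1'
  have e3 : x3 * (4*ξ^2*(1 - ξ)) = (1 - 2*ξ + 2*ξ^2)*x2 := by
    rw [hx3]; exact div_mul_cancel₀ _ hden3.ne'
  refine ⟨?_, ?_, ?_, hx4.symm⟩
  · -- x1 < x2 : equivalent to (ξ-1)(2ξ²-1) x2 < 0-ish
    nlinarith [mul_pos (sub_pos.mpr hξ1 : (0:ℝ) < 1 - ξ) (by linarith : (0:ℝ) < 1 - 2*ξ^2),
      mul_neg_of_pos_of_neg (mul_pos (sub_pos.mpr hξ1) (by linarith : (0:ℝ) < 1 - 2*ξ^2)) hx2]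
  · nlinarith [mul_pos (by linarith : (0:ℝ) < 2*ξ - 1) (by linarith : (0:ℝ) < 1 - 2*ξ^2),
      mul_neg_of_pos_of_neg (mul_pos (by linarith : (0:ℝ) < 2*ξ - 1) (by linarith : (0:ℝ) < 1 - 2*ξ^2)) hx2]
  · nlinarith [mul_neg_of_pos_of_neg hQ hx2]
end
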